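/- Let (F_iG)_{i≥1} be a filtration of a group G with F₁G = G. Then for every i ≥ 1 the radical closure √(F_iG) := {g ∈ G : ∃ k ≥ 1, g^k ∈ F_iG} is a normal subgroup of G containing F_iG, and the quotient group G/√(F_iG) is nilpotent and torsion-free. -/

import Mathlib

open Subgroup
open scoped commutatorElement

universe u

-- central elements can be absorbed in commutators
lemma comm_eq_of_center {H : Type u} [Group H] {z w : H} (a b : H)
    (hz : z ∈ Subgroup.center H) (hw : w ∈ Subgroup.center H) :
    ⁅a * z, b * w⁆ = ⁅a, b⁆ := by
  have hz' : ∀ g : H, g * z = z * g := fun g => Subgroup.mem_center_iff.mp hz g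
  have hw' : ∀ g : H, g * w = w * g := fun g => Subgroup.mem_center_iff.mp hw g
  rw [commutatorElement_def, commutatorElement_def, mul_inv_rev, mul_inv_rev]
  have h1 : z * (b * w) * z⁻¹ = b * w := by rw [← hz' (b * w)]; group
  calc a * z * (b * w) * (z⁻¹ * a⁻¹) * (w⁻¹ * b⁻¹)
      = a * (z * (b * w) * z⁻¹) * a⁻¹ * (w⁻¹ * b⁻¹) := by group
    _ = a * (b * w) * a⁻¹ * (w⁻¹ * b⁻¹) := by rw [h1]
    _ = a * b * (w * a⁻¹) * (w⁻¹ * b⁻¹) := by group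
    _ = a * b * (a⁻¹ * w) * (w⁻¹ * b⁻¹) := by rw [← hw' a⁻¹]
    _ = a * b * a⁻¹ * b⁻¹ := by group

lemma finite_commutatorSet_of_finite_quotient_center {H : Type u} [Group H]
    (hfin : Finite (H ⧸ Subgroup.center H)) : Finite (commutatorSet H) := by
  let Z := Subgroup.center H
  let f : H ⧸ Z → H ⧸ Z → H :=
    Quotient.lift₂ (fun a b => ⁅a, b⁆) (by
      intro a b a' b' ha hb
      have ha' := QuotientGroup.leftRel_apply.mp ha
      have hb' := QuotientGroup.leftRel_apply.mp hb
      have e1 : a' = a * (a⁻¹ * a') := by group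
      have e2 : b' = b * (b⁻¹ * b') := by group
      rw [e1, e2, comm_eq_of_center a b ha' hb'])
  have hsub : commutatorSet H ⊆ Set.range (fun p : (H ⧸ Z) × (H ⧸ Z) => f p.1 p.2) := by
    rintro x ⟨g₁, g₂, rfl⟩
    exact ⟨(QuotientGroup.mk g₁, QuotientGroup.mk g₂), rfl⟩
  exact (Set.finite_range _).subset hsub

lemma finite_of_nilpotent_closure_torsion :
    ∀ (c : ℕ) (H : Type u) (_ : Group H) (_ : Group.IsNilpotent H),
      Group.nilpotencyClass H ≤ c →
      ∀ S : Set H, S.Finite → (∀ a ∈ S, IsOfFinOrder a) → Subgroup.closure S = ⊤ →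
      Finite H := by
  intro c
  induction c with
  | zero =>
    intro H _ _ hc S _ _ _
    have : Subsingleton H := by
      rw [← nilpotencyClass_zero_iff_subsingleton]
      omega
    exact Finite.of_subsingleton
  | succ c ih =>
    intro H _ _ hc S hSfin hStor hSgen
    set Z := Subgroup.center H with hZ
    have hsurj : Function.Surjective (QuotientGroup.mk' Z) := QuotientGroup.mk'_surjective Z
    -- the quotient by the center is finite by induction
    have hQfin : Finite (H ⧸ Z) := by
      refine ih (H ⧸ Z) inferInstance inferInstance ?_ (QuotientGroup.mk' Z '' S) (hSfin.image _) ?_ ?_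
      · show Group.nilpotencyClass (H ⧸ Subgroup.center H) ≤ c
        have h := nilpotencyClass_quotient_center (G := H)
        omega
      · rintro a ⟨g, hg, rfl⟩
        exact (QuotientGroup.mk' Z).isOfFinOrder (hStor g hg)
      · rw [← MonoidHom.map_closure, hSgen, Subgroup.map_top_of_surjective _ hsurj]
    -- Schur: the commutator subgroup is finite
    have hcsfin : Finite (commutatorSet H) := finite_commutatorSet_of_finite_quotient_center hQfin
    have hcommfin : Finite (commutator H) := inferInstance
    -- the abelianization is a f.g. torsion commutative group, hence finite
    have hFG : Group.FG H := Group.fg_iff.mpr ⟨S, hSgen, hSfin⟩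
    have hofsurj : Function.Surjective (Abelianization.of (G := H)) := fun x =>
      Quotient.inductionOn' x fun g => ⟨g, rfl⟩
    have hAbFG : Group.FG (Abelianization H) :=
      Group.fg_of_surjective (f := Abelianization.of) hofsurj
    have hAbTor : Monoid.IsTorsion (Abelianization H) := by
      intro x
      have hle : Subgroup.closure (Abelianization.of '' S) ≤ CommGroup.torsion (Abelianization H) := by
        rw [Subgroup.closure_le]
        rintro a ⟨g, hg, rfl⟩
        exact (Abelianization.of).isOfFinOrder (hStor g hg)
      have htop : Subgroup.closure (Abelianization.of '' S) = ⊤ := by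
        rw [← MonoidHom.map_closure, hSgen, Subgroup.map_top_of_surjective _ hofsurj]
      rw [htop] at hle
      exact (CommGroup.mem_torsion x).mp (hle (Subgroup.mem_top x))
    have hAbFin : Finite (Abelianization H) := CommGroup.finite_of_fg_torsion _ hAbTor
    -- assemble: H ≃ (H ⧸ commutator H) × commutator H
    have : Finite ((H ⧸ commutator H) × commutator H) := by
      have : Finite (H ⧸ commutator H) := hAbFin
      exact Finite.instProd
    exact Finite.of_equiv _ (Subgroup.groupEquivQuotientProdSubgroup (s := commutator H)).symm

lemma isOfFinOrder_mul_of_nilpotent {H : Type u} [Group H] [Group.IsNilpotent H]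
    {a b : H} (ha : IsOfFinOrder a) (hb : IsOfFinOrder b) : IsOfFinOrder (a * b) := by
  set K := Subgroup.closure ({a, b} : Set H) with hK
  have haK : a ∈ K := Subgroup.subset_closure (by simp)
  have hbK : b ∈ K := Subgroup.subset_closure (by simp)
  -- K is finite
  have hfin : Finite K := by
    refine finite_of_nilpotent_closure_torsion (Group.nilpotencyClass K) K
      inferInstance inferInstance le_rfl
      (((↑) : K → H) ⁻¹' ({a, b} : Set H)) ?_ ?_ ?_
    · exact Set.Finite.preimage Subtype.coe_injective.injOn (by simp)
    · rintro x hx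
      rw [isOfFinOrder_iff_pow_eq_one]
      have hx' : (x : H) = a ∨ (x : H) = b := by simpa using hx
      rcases hx' with hx | hx
      · obtain ⟨n, hn, hna⟩ := isOfFinOrder_iff_pow_eq_one.mp ha
        exact ⟨n, hn, by ext; simp [hx, hna]⟩
      · obtain ⟨n, hn, hnb⟩ := isOfFinOrder_iff_pow_eq_one.mp hb
        exact ⟨n, hn, by ext; simp [hx, hnb]⟩
    · exact Subgroup.closure_closure_coe_preimage
  have : IsOfFinOrder (⟨a * b, K.mul_mem haK hbK⟩ : K) := isOfFinOrder_of_finite _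
  exact K.subtype.isOfFinOrder this

lemma quotient_nilpotent_of_lcs_le {H : Type u} [Group H] {N : Subgroup H} [N.Normal]
    {n : ℕ} (h : (⊤ : Subgroup H).lowerCentralSeries n ≤ N) : Group.IsNilpotent (H ⧸ N) := by
  rw [Subgroup.nilpotent_iff_lowerCentralSeries]
  refine ⟨n, ?_⟩
  have hsurj : Function.Surjective (QuotientGroup.mk' N) := QuotientGroup.mk'_surjective N
  have hle : ∀ m : ℕ, (⊤ : Subgroup (H ⧸ N)).lowerCentralSeries m ≤
      Subgroup.map (QuotientGroup.mk' N) ((⊤ : Subgroup H).lowerCentralSeries m) := by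
    intro m
    induction m with
    | zero => simp [Subgroup.map_top_of_surjective _ hsurj]
    | succ m ihm =>
      show ⁅(⊤ : Subgroup (H ⧸ N)).lowerCentralSeries m, ⊤⁆ ≤
        Subgroup.map (QuotientGroup.mk' N) ⁅(⊤ : Subgroup H).lowerCentralSeries m, ⊤⁆
      rw [Subgroup.map_commutator]
      exact Subgroup.commutator_mono ihm
        (le_of_eq (Subgroup.map_top_of_surjective _ hsurj).symm)
  rw [eq_bot_iff]
  refine (hle n).trans ?_
  rw [Subgroup.map_le_iff_le_comap]
  intro x hx
  simp only [Subgroup.mem_comap, QuotientGroup.mk'_apply, Subgroup.mem_bot]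
  rw [QuotientGroup.eq_one_iff]
  exact h hx


/-- Let `(F_i G)_{i≥1}` be a filtration (N-series) of a group `G`
with `F₁ G = G`.  For every `i ≥ 1`, the radical closure
`√(F_i G) = {g ∈ G : ∃ k ≥ 1, g^k ∈ F_i G}` is a normal subgroup `R` of `G` containing
`F_i G`, and the quotient `G / R` is nilpotent and torsion-free. -/
theorem radical_closure_normal_quotient_nilpotent_torsionFree
    (G : Type*) [Group G] (F : ℕ → Subgroup G)
    (hdesc : ∀ i : ℕ, F (i + 1) ≤ F i)
    (hF1 : F 1 = ⊤)
    (hcomm : ∀ i j : ℕ, 1 ≤ i → 1 ≤ j → ⁅F i, F j⁆ ≤ F (i + j))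
    (i : ℕ) (hi : 1 ≤ i) :
    ∃ R : Subgroup G,
      (∀ g : G, g ∈ R ↔ ∃ k : ℕ, 1 ≤ k ∧ g ^ k ∈ F i) ∧
      F i ≤ R ∧
      R.Normal ∧
      ∀ [_hn : R.Normal],
        Group.IsNilpotent (G ⧸ R) ∧
        (∀ x : G ⧸ R, ∀ n : ℕ, 1 ≤ n → x ^ n = 1 → x = 1) := by
  -- F i is a normal subgroup
  have hFiN : (F i).Normal := by
    constructor
    intro g hg h
    have hcm : ⁅h, g⁆ ∈ F (1 + i) :=
      hcomm 1 i le_rfl hi (Subgroup.commutator_mem_commutator (by rw [hF1]; trivial) hg)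
    have hle : F (1 + i) ≤ F i := by rw [add_comm]; exact hdesc i
    have h2 : ⁅h, g⁆ * g ∈ F i := (F i).mul_mem (hle hcm) hg
    have he : h * g * h⁻¹ = ⁅h, g⁆ * g := by rw [commutatorElement_def]; group
    rwa [he]
  -- the lower central series is bounded by the filtration
  have hlcs : ∀ n : ℕ, (⊤ : Subgroup G).lowerCentralSeries n ≤ F (n + 1) := by
    intro n
    induction n with
    | zero => rw [Subgroup.lowerCentralSeries_zero]; exact le_of_eq hF1.symm
    | succ n ih =>
      show ⁅(⊤ : Subgroup G).lowerCentralSeries n, ⊤⁆ ≤ F (n + 1 + 1)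
      calc ⁅(⊤ : Subgroup G).lowerCentralSeries n, ⊤⁆ ≤ ⁅F (n + 1), F 1⁆ :=
            Subgroup.commutator_mono ih (le_of_eq hF1.symm)
        _ ≤ F (n + 1 + 1) := hcomm (n + 1) 1 (by omega) le_rfl
  have hlcsFi : (⊤ : Subgroup G).lowerCentralSeries (i - 1) ≤ F i := by
    have := hlcs (i - 1)
    rwa [Nat.sub_add_cancel hi] at this
  haveI : Group.IsNilpotent (G ⧸ F i) := quotient_nilpotent_of_lcs_le hlcsFi
  -- the radical closure as a subgroup
  have key : ∀ a b : G, (∃ k : ℕ, 1 ≤ k ∧ a ^ k ∈ F i) → (∃ k : ℕ, 1 ≤ k ∧ b ^ k ∈ F i) →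
      ∃ k : ℕ, 1 ≤ k ∧ (a * b) ^ k ∈ F i := by
    intro a b ⟨m, hm, ham⟩ ⟨n, hn, hbn⟩
    have ta : IsOfFinOrder (QuotientGroup.mk' (F i) a) := by
      rw [isOfFinOrder_iff_pow_eq_one]
      exact ⟨m, by omega, by
        rw [← map_pow, QuotientGroup.mk'_apply, QuotientGroup.eq_one_iff]; exact ham⟩
    have tb : IsOfFinOrder (QuotientGroup.mk' (F i) b) := by
      rw [isOfFinOrder_iff_pow_eq_one]
      exact ⟨n, by omega, by
        rw [← map_pow, QuotientGroup.mk'_apply, QuotientGroup.eq_one_iff]; exact hbn⟩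
    have tab := isOfFinOrder_mul_of_nilpotent ta tb
    rw [← map_mul] at tab
    obtain ⟨k, hk, hk1⟩ := isOfFinOrder_iff_pow_eq_one.mp tab
    refine ⟨k, by omega, ?_⟩
    rwa [← map_pow, QuotientGroup.mk'_apply, QuotientGroup.eq_one_iff] at hk1
  set R : Subgroup G :=
    { carrier := {g : G | ∃ k : ℕ, 1 ≤ k ∧ g ^ k ∈ F i}
      one_mem' := ⟨1, le_rfl, by simpa using (F i).one_mem⟩
      mul_mem' := by
        intro a b ha hb
        exact key a b ha hb
      inv_mem' := by
        rintro a ⟨k, hk, hak⟩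
        exact ⟨k, hk, by rw [inv_pow]; exact (F i).inv_mem hak⟩ } with hR
  have hmemR : ∀ g : G, g ∈ R ↔ ∃ k : ℕ, 1 ≤ k ∧ g ^ k ∈ F i := fun g => Iff.rfl
  have hFiR : F i ≤ R := fun g hg => ⟨1, le_rfl, by simpa using hg⟩
  have hRN : R.Normal := by
    constructor
    rintro g ⟨k, hk, hgk⟩ h
    refine ⟨k, hk, ?_⟩
    have he : ∀ m : ℕ, (h * g * h⁻¹) ^ m = h * g ^ m * h⁻¹ := by
      intro m
      induction m with
      | zero => simp
      | succ m ihm => rw [pow_succ, pow_succ, ihm]; group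
    have he := he k
    rw [he]
    exact hFiN.conj_mem _ hgk h
  refine ⟨R, hmemR, hFiR, hRN, ?_⟩
  intro _hn
  constructor
  · exact quotient_nilpotent_of_lcs_le (hlcsFi.trans hFiR)
  · intro x n hn hxn
    obtain ⟨g, rfl⟩ := QuotientGroup.mk'_surjective R x
    have hgn : g ^ n ∈ R := by
      rwa [← map_pow, QuotientGroup.mk'_apply, QuotientGroup.eq_one_iff] at hxn
    obtain ⟨k, hk, hgk⟩ := hgn
    rw [← pow_mul] at hgk
    have hgR : g ∈ R := ⟨n * k, by simpa using Nat.mul_le_mul hn hk, hgk⟩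
    rw [QuotientGroup.mk'_apply, QuotientGroup.eq_one_iff]
    exact hgR
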